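/- Let p ≥ 3 be a prime and define b_p(n) = ⌊p·n/(p−1)² − 1/(p−1)⌋ (an integer). Then for all natural numbers k and l, one has b_p(k + l) ≥ b_p(k) + v_p(l!). -/

import Mathlib

/-- `b p n = ⌊p·n/(p−1)² − 1/(p−1)⌋`, the floor of a rational number, as an integer. -/
def bpFun (p n : ℕ) : ℤ :=
  ⌊(p : ℚ) * n / ((p : ℚ) - 1) ^ 2 - 1 / ((p : ℚ) - 1)⌋

theorem bpFun_add_ge_valFactorial (p : ℕ) (hp : p.Prime) (hp3 : p ≥ 3) (k l : ℕ) :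
    bpFun p (k + l) ≥ bpFun p k + (padicValNat p (Nat.factorial l) : ℤ) := by
  haveI : Fact p.Prime := ⟨hp⟩
  set v : ℕ := padicValNat p (Nat.factorial l) with hv
  have hpq : (3 : ℚ) ≤ (p : ℚ) := by exact_mod_cast hp3
  have hpos : (0 : ℚ) < ((p : ℚ) - 1) ^ 2 := by nlinarith
  -- key: (v : ℚ) ≤ p * l / (p-1)^2
  have key : (v : ℚ) ≤ (p : ℚ) * l / ((p : ℚ) - 1) ^ 2 := by
    rcases Nat.eq_zero_or_pos l with hl | hl
    · subst hl
      have : v = 0 := by simp [hv, Nat.factorial]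
      rw [this]
      push_cast
      positivity
    · have hleg : (p - 1) * v = l - (p.digits l).sum := sub_one_mul_padicValNat_factorial l
      have hs : 1 ≤ (p.digits l).sum := by
        by_contra h
        push_neg at h
        interval_cases hsum : (p.digits l).sum
        have hall := List.sum_eq_zero_iff.mp hsum
        have hne : p.digits l ≠ [] := Nat.digits_ne_nil_iff_ne_zero.mpr hl.ne'
        have hlast := Nat.getLast_digit_ne_zero p hl.ne'
        exact hlast (hall _ (List.getLast_mem hne))
      have h1 : (p - 1) * v ≤ l - 1 := by
        rw [hleg]; exact Nat.sub_le_sub_left hs l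
      have h1q : ((p : ℚ) - 1) * v ≤ (l : ℚ) - 1 := by
        have := (Nat.cast_le (α := ℚ)).mpr h1
        push_cast [Nat.cast_sub (by omega : 1 ≤ p), Nat.cast_sub hl] at this
        linarith
      rw [le_div_iff₀ hpos]
      nlinarith [Nat.cast_nonneg (α := ℚ) v, Nat.cast_nonneg (α := ℚ) l]
  -- floor argument
  set x : ℚ := (p : ℚ) * k / ((p : ℚ) - 1) ^ 2 - 1 / ((p : ℚ) - 1) with hx
  have hxl : (p : ℚ) * (k + l : ℕ) / ((p : ℚ) - 1) ^ 2 - 1 / ((p : ℚ) - 1)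
      = x + (p : ℚ) * l / ((p : ℚ) - 1) ^ 2 := by
    push_cast
    rw [mul_add, add_div]
    ring
  have : bpFun p (k + l) = ⌊x + (p : ℚ) * l / ((p : ℚ) - 1) ^ 2⌋ := by
    rw [bpFun, hxl]
  rw [this]
  calc ⌊x + (p : ℚ) * l / ((p : ℚ) - 1) ^ 2⌋ ≥ ⌊x + (v : ℚ)⌋ :=
        Int.floor_le_floor (by linarith)
    _ = ⌊x⌋ + v := by rw [Int.floor_add_natCast]
    _ = bpFun p k + v := rfl
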